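/- If P, Q, R are positive definite and Pol(R^(1/2) P^(1/2)) = Pol(R^(1/2) Q^(1/2)), then there exists a positive definite B commuting with H := P^(-1/4) Q^(1/2) P^(-1/4) such that R = P^(-1/4) B P^(1/2) B P^(-1/4). -/

import Mathlib

open scoped Classical
open Matrix
open scoped ComplexOrder


noncomputable def mpow {d : ℕ} (A : Matrix (Fin d) (Fin d) ℂ) (t : ℝ) : Matrix (Fin d) (Fin d) ℂ :=
  if hA : A.IsHermitian then
    (hA.eigenvectorUnitary : Matrix (Fin d) (Fin d) ℂ) *
      Matrix.diagonal (fun i => ((hA.eigenvalues i ^ t : ℝ) : ℂ)) *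
      (star (hA.eigenvectorUnitary : Matrix (Fin d) (Fin d) ℂ))
  else 0


/-- The unitary polar factor of an invertible matrix: the unique unitary `U` with
`star U * X` positive definite (junk value `1` if none exists). -/
noncomputable def polar {d : ℕ} (X : Matrix (Fin d) (Fin d) ℂ) : Matrix (Fin d) (Fin d) ℂ :=
  if h : ∃ U : Matrix (Fin d) (Fin d) ℂ, U ∈ Matrix.unitaryGroup (Fin d) ℂ ∧ (star U * X).PosDef
  then h.choose else 1

section Aux

variable {d : ℕ}

lemma posDef_conj {A C : Matrix (Fin d) (Fin d) ℂ} (hA : A.PosDef) (hC : IsUnit C) :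
    (C * A * Cᴴ).PosDef := by
  refine Matrix.PosDef.of_dotProduct_mulVec_pos ?_ (fun x hx => ?_)
  · have h1 := hA.isHermitian
    unfold Matrix.IsHermitian at *
    simp [Matrix.conjTranspose_mul, h1, Matrix.mul_assoc]
  · have hx' : Cᴴ *ᵥ x ≠ 0 := by
      have hinj : Function.Injective (Cᴴ).mulVec :=
        Matrix.mulVec_injective_iff_isUnit.2 ((Matrix.isUnit_conjTranspose C).2 hC)
      intro h
      exact hx (by simpa using hinj (h.trans (Matrix.mulVec_zero Cᴴ).symm))
    have key : star x ⬝ᵥ ((C * A * Cᴴ) *ᵥ x) = star (Cᴴ *ᵥ x) ⬝ᵥ (A *ᵥ (Cᴴ *ᵥ x)) := by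
      rw [Matrix.star_mulVec, Matrix.conjTranspose_conjTranspose, ← Matrix.mulVec_mulVec,
        ← Matrix.mulVec_mulVec, Matrix.dotProduct_mulVec]
    rw [key]
    exact hA.dotProduct_mulVec_pos hx'

lemma mpow_eq {A : Matrix (Fin d) (Fin d) ℂ} (hA : A.IsHermitian) (t : ℝ) :
    mpow A t = (hA.eigenvectorUnitary : Matrix (Fin d) (Fin d) ℂ) *
      Matrix.diagonal (fun i => ((hA.eigenvalues i ^ t : ℝ) : ℂ)) *
      (star (hA.eigenvectorUnitary : Matrix (Fin d) (Fin d) ℂ)) := dif_pos hA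

lemma mpow_posDef {A : Matrix (Fin d) (Fin d) ℂ} (hA : A.PosDef) (t : ℝ) :
    (mpow A t).PosDef := by
  rw [mpow_eq hA.isHermitian]
  have hdiag : (Matrix.diagonal (fun i => ((hA.isHermitian.eigenvalues i ^ t : ℝ) : ℂ))).PosDef :=
    Matrix.PosDef.diagonal fun i => by
      rw [Complex.zero_lt_real]
      exact Real.rpow_pos_of_pos (hA.eigenvalues_pos i) t
  have hst : star (hA.isHermitian.eigenvectorUnitary : Matrix (Fin d) (Fin d) ℂ)
      = (hA.isHermitian.eigenvectorUnitary : Matrix (Fin d) (Fin d) ℂ)ᴴ := rfl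
  rw [hst]
  exact posDef_conj hdiag ((Unitary.toUnits hA.isHermitian.eigenvectorUnitary).isUnit)

lemma mpow_isHermitian {A : Matrix (Fin d) (Fin d) ℂ} (hA : A.PosDef) (t : ℝ) :
    (mpow A t).IsHermitian := (mpow_posDef hA t).isHermitian

lemma mpow_add {A : Matrix (Fin d) (Fin d) ℂ} (hA : A.PosDef) (s t : ℝ) :
    mpow A s * mpow A t = mpow A (s + t) := by
  rw [mpow_eq hA.isHermitian, mpow_eq hA.isHermitian, mpow_eq hA.isHermitian]
  set V := (hA.isHermitian.eigenvectorUnitary : Matrix (Fin d) (Fin d) ℂ)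
  have hV : star V * V = 1 := Matrix.mem_unitaryGroup_iff'.mp hA.isHermitian.eigenvectorUnitary.2
  calc V * Matrix.diagonal (fun i => ((hA.isHermitian.eigenvalues i ^ s : ℝ) : ℂ)) * star V *
        (V * Matrix.diagonal (fun i => ((hA.isHermitian.eigenvalues i ^ t : ℝ) : ℂ)) * star V)
      = V * (Matrix.diagonal (fun i => ((hA.isHermitian.eigenvalues i ^ s : ℝ) : ℂ)) *
          Matrix.diagonal (fun i => ((hA.isHermitian.eigenvalues i ^ t : ℝ) : ℂ))) * star V := by
        rw [Matrix.mul_assoc, Matrix.mul_assoc, Matrix.mul_assoc, ← Matrix.mul_assoc (star V),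
          hV, Matrix.one_mul, ← Matrix.mul_assoc, ← Matrix.mul_assoc, Matrix.mul_assoc V]
    _ = V * Matrix.diagonal (fun i => ((hA.isHermitian.eigenvalues i ^ (s + t) : ℝ) : ℂ)) *
          star V := by
        have he : (fun i => ((hA.isHermitian.eigenvalues i ^ s : ℝ) : ℂ) *
            ((hA.isHermitian.eigenvalues i ^ t : ℝ) : ℂ))
            = fun i => ((hA.isHermitian.eigenvalues i ^ (s + t) : ℝ) : ℂ) := by
          funext i
          rw [← Complex.ofReal_mul, ← Real.rpow_add (hA.eigenvalues_pos i)]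
        rw [Matrix.diagonal_mul_diagonal, he]

lemma mpow_zero {A : Matrix (Fin d) (Fin d) ℂ} (hA : A.PosDef) :
    mpow A 0 = 1 := by
  rw [mpow_eq hA.isHermitian]
  have hV : (hA.isHermitian.eigenvectorUnitary : Matrix (Fin d) (Fin d) ℂ) *
      star (hA.isHermitian.eigenvectorUnitary : Matrix (Fin d) (Fin d) ℂ) = 1 :=
    Matrix.mem_unitaryGroup_iff.mp hA.isHermitian.eigenvectorUnitary.2
  simp only [Real.rpow_zero, Complex.ofReal_one, Matrix.diagonal_one, Matrix.mul_one]
  exact hV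

lemma mpow_one {A : Matrix (Fin d) (Fin d) ℂ} (hA : A.PosDef) :
    mpow A 1 = A := by
  rw [mpow_eq hA.isHermitian]
  simp only [Real.rpow_one]
  exact (hA.isHermitian.spectral_theorem).symm

lemma mpow_half_self {A : Matrix (Fin d) (Fin d) ℂ} (hA : A.PosDef) :
    mpow A (1/2) * mpow A (1/2) = A := by
  rw [mpow_add hA]; norm_num; exact mpow_one hA

lemma polar_exists {X : Matrix (Fin d) (Fin d) ℂ} (hM : (Xᴴ * X).PosDef) :
    ∃ U : Matrix (Fin d) (Fin d) ℂ, U ∈ Matrix.unitaryGroup (Fin d) ℂ ∧ (star U * X).PosDef := by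
  set M := Xᴴ * X with hMdef
  set N := mpow M (-(1/2)) with hNdef
  have hN : N.PosDef := mpow_posDef hM _
  have hNM : N * mpow M (1/2) = 1 := by
    rw [hNdef, mpow_add hM]; norm_num; exact mpow_zero hM
  have hMN : mpow M (1/2) * N = 1 := by
    rw [hNdef, mpow_add hM]; norm_num; exact mpow_zero hM
  refine ⟨X * N, ?_, ?_⟩
  · rw [Matrix.mem_unitaryGroup_iff']
    have hstar : star (X * N) = N * Xᴴ := by
      rw [Matrix.star_eq_conjTranspose, Matrix.conjTranspose_mul, hN.isHermitian.eq]
    rw [hstar]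
    calc N * Xᴴ * (X * N) = N * (Xᴴ * X) * N := by
          rw [Matrix.mul_assoc, Matrix.mul_assoc, Matrix.mul_assoc]
      _ = N * (mpow M (1/2) * mpow M (1/2)) * N := by
          rw [← hMdef]
          conv_lhs => rw [show M = mpow M (1/2) * mpow M (1/2) from (mpow_half_self hM).symm]
      _ = (N * mpow M (1/2)) * (mpow M (1/2) * N) := by
          rw [Matrix.mul_assoc, Matrix.mul_assoc, Matrix.mul_assoc]
      _ = 1 := by rw [hNM, hMN, Matrix.one_mul]
  · have hstar : star (X * N) = N * Xᴴ := by
      rw [Matrix.star_eq_conjTranspose, Matrix.conjTranspose_mul, hN.isHermitian.eq]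
    rw [hstar]
    have hkey : N * Xᴴ * X = mpow M (1/2) := by
      rw [Matrix.mul_assoc, ← hMdef]
      conv_lhs => rw [show M = mpow M (1/2) * mpow M (1/2) from (mpow_half_self hM).symm]
      rw [← Matrix.mul_assoc, hNM, Matrix.one_mul]
    rw [hkey]
    exact mpow_posDef hM _

lemma polar_spec {X : Matrix (Fin d) (Fin d) ℂ}
    (h : ∃ U : Matrix (Fin d) (Fin d) ℂ, U ∈ Matrix.unitaryGroup (Fin d) ℂ ∧ (star U * X).PosDef) :
    polar X ∈ Matrix.unitaryGroup (Fin d) ℂ ∧ (star (polar X) * X).PosDef := by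
  rw [polar, dif_pos h]
  exact h.choose_spec

end Aux

/-- If `Pol(R^(1/2) P^(1/2)) = Pol(R^(1/2) Q^(1/2))`, then there exists a positive definite
`B` commuting with `H = P^(-1/4) Q^(1/2) P^(-1/4)` with `R = P^(-1/4) B P^(1/2) B P^(-1/4)`. -/
theorem holevo_base_necessary {d : ℕ} {P Q R : Matrix (Fin d) (Fin d) ℂ}
    (hP : P.PosDef) (hQ : Q.PosDef) (hR : R.PosDef)
    (hpol : polar (mpow R (1/2) * mpow P (1/2)) = polar (mpow R (1/2) * mpow Q (1/2))) :
    ∃ B : Matrix (Fin d) (Fin d) ℂ, B.PosDef ∧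
      B * (mpow P (-(1/4)) * mpow Q (1/2) * mpow P (-(1/4)))
        = (mpow P (-(1/4)) * mpow Q (1/2) * mpow P (-(1/4))) * B ∧
      R = mpow P (-(1/4)) * B * mpow P (1/2) * B * mpow P (-(1/4)) := by
  -- abbreviations
  set X1 : Matrix (Fin d) (Fin d) ℂ := mpow R (1/2) * mpow P (1/2) with hX1
  set X2 : Matrix (Fin d) (Fin d) ℂ := mpow R (1/2) * mpow Q (1/2) with hX2
  have hM1 : X1ᴴ * X1 = mpow P (1/2) * R * mpow P (1/2) := by
    rw [hX1, Matrix.conjTranspose_mul, (mpow_isHermitian hR (1/2)).eq,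
      (mpow_isHermitian hP (1/2)).eq]
    simp only [Matrix.mul_assoc]
    rw [← Matrix.mul_assoc (mpow R (1/2)) (mpow R (1/2)), mpow_half_self hR]
  have hM2 : X2ᴴ * X2 = mpow Q (1/2) * R * mpow Q (1/2) := by
    rw [hX2, Matrix.conjTranspose_mul, (mpow_isHermitian hR (1/2)).eq,
      (mpow_isHermitian hQ (1/2)).eq]
    simp only [Matrix.mul_assoc]
    rw [← Matrix.mul_assoc (mpow R (1/2)) (mpow R (1/2)), mpow_half_self hR]
  have hX1pos : (X1ᴴ * X1).PosDef := by
    rw [hM1]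
    have := posDef_conj hR (mpow_posDef hP (1/2)).isUnit
    rwa [(mpow_isHermitian hP (1/2)).eq] at this
  have hX2pos : (X2ᴴ * X2).PosDef := by
    rw [hM2]
    have := posDef_conj hR (mpow_posDef hQ (1/2)).isUnit
    rwa [(mpow_isHermitian hQ (1/2)).eq] at this
  obtain ⟨hUuni, hS1pos⟩ := polar_spec (polar_exists hX1pos)
  have hS2pos : (star (polar X1) * X2).PosDef := by
    rw [hpol]; exact (polar_spec (polar_exists hX2pos)).2
  set U := polar X1 with hUdef
  set S1 := star U * X1 with hS1def
  set S2 := star U * X2 with hS2def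
  have hP4 := mpow_posDef hP (-(1/4))
  have hP4herm : (mpow P (-(1/4)))ᴴ = mpow P (-(1/4)) := (mpow_isHermitian hP _).eq
  -- arithmetic of powers of P
  have e1 : mpow P (-(1/4)) * mpow P (-(1/4)) = mpow P (-(1/2)) := by
    rw [mpow_add hP]; norm_num
  have e2 : mpow P (1/2) * mpow P (-(1/2)) = 1 := by
    rw [mpow_add hP]; norm_num; exact mpow_zero hP
  have e3 : mpow P (-(1/2)) * mpow P (1/2) = 1 := by
    rw [mpow_add hP]; norm_num; exact mpow_zero hP
  have middle : mpow P (-(1/4)) * mpow P (1/2) * mpow P (-(1/4)) = 1 := by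
    rw [mpow_add hP, mpow_add hP]; norm_num; exact mpow_zero hP
  -- the two key identities coming from the equality of polar factors
  have key1 : S1 * mpow P (-(1/2)) * mpow Q (1/2) = S2 := by
    rw [hS1def, hS2def, hX1, hX2]
    simp only [Matrix.mul_assoc]
    rw [← Matrix.mul_assoc (mpow P (1/2)) (mpow P (-(1/2))), e2, Matrix.one_mul]
  have key2 : mpow Q (1/2) * mpow P (-(1/2)) * S1 = S2 := by
    have hst : (S1 * mpow P (-(1/2)) * mpow Q (1/2))ᴴ = S2ᴴ :=
      congrArg Matrix.conjTranspose key1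
    rw [Matrix.conjTranspose_mul, Matrix.conjTranspose_mul, (mpow_isHermitian hQ (1/2)).eq,
      (mpow_isHermitian hP (-(1/2))).eq, hS1pos.isHermitian.eq, hS2pos.isHermitian.eq] at hst
    rw [Matrix.mul_assoc]
    exact hst
  have hUU : U * star U = 1 := Matrix.mem_unitaryGroup_iff.mp hUuni
  have sq : S1 * S1 = mpow P (1/2) * R * mpow P (1/2) := by
    have hS1herm : star S1 = S1 := by
      rw [Matrix.star_eq_conjTranspose]; exact hS1pos.isHermitian.eq
    calc S1 * S1 = star S1 * S1 := by rw [hS1herm]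
      _ = (star X1 * U) * (star U * X1) := by rw [hS1def, StarMul.star_mul, star_star]
      _ = star X1 * (U * star U) * X1 := by simp only [Matrix.mul_assoc]
      _ = star X1 * X1 := by rw [hUU, Matrix.mul_one]
      _ = mpow P (1/2) * R * mpow P (1/2) := by rw [Matrix.star_eq_conjTranspose]; exact hM1
  refine ⟨mpow P (-(1/4)) * S1 * mpow P (-(1/4)), ?_, ?_, ?_⟩
  · have := posDef_conj hS1pos hP4.isUnit
    rwa [hP4herm] at this
  · calc mpow P (-(1/4)) * S1 * mpow P (-(1/4)) *
          (mpow P (-(1/4)) * mpow Q (1/2) * mpow P (-(1/4)))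
        = mpow P (-(1/4)) * (S1 * mpow P (-(1/2)) * mpow Q (1/2)) * mpow P (-(1/4)) := by
          rw [← e1]; simp only [Matrix.mul_assoc]
      _ = mpow P (-(1/4)) * S2 * mpow P (-(1/4)) := by rw [key1]
      _ = mpow P (-(1/4)) * (mpow Q (1/2) * mpow P (-(1/2)) * S1) * mpow P (-(1/4)) := by
          rw [key2]
      _ = mpow P (-(1/4)) * mpow Q (1/2) * mpow P (-(1/4)) *
          (mpow P (-(1/4)) * S1 * mpow P (-(1/4))) := by
          rw [← e1]; simp only [Matrix.mul_assoc]
  · have expand : mpow P (-(1/4)) * (mpow P (-(1/4)) * S1 * mpow P (-(1/4))) * mpow P (1/2) *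
        (mpow P (-(1/4)) * S1 * mpow P (-(1/4))) * mpow P (-(1/4))
        = (mpow P (-(1/4)) * mpow P (-(1/4))) * S1 *
          (mpow P (-(1/4)) * mpow P (1/2) * mpow P (-(1/4))) * S1 *
          (mpow P (-(1/4)) * mpow P (-(1/4))) := by
      simp only [Matrix.mul_assoc]
    rw [expand, e1, middle, Matrix.mul_one, Matrix.mul_assoc (mpow P (-(1/2))) S1 S1, sq]
    rw [show mpow P (-(1/2)) * (mpow P (1/2) * R * mpow P (1/2)) * mpow P (-(1/2))
        = (mpow P (-(1/2)) * mpow P (1/2)) * R * (mpow P (1/2) * mpow P (-(1/2))) by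
      simp only [Matrix.mul_assoc]]
    rw [e3, e2, Matrix.one_mul, Matrix.mul_one]
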